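/- arXiv:2103.15257 — 5 statements merged into one kernel-verified Lean document; each statement's English description precedes it below -/
import Mathlib

section
/- Let G be a topological group acting continuously on a topological space X, and let g₁,…,gₙ be nonidentity elements of G. Suppose X₁⁺, X₁⁻, …, Xₙ⁺, Xₙ⁻ are nonempty, pairwise disjoint, closed subsets of X that do not cover X, and for all i we have gᵢ(X \ Xᵢ⁻) ⊆ Xᵢ⁺ and gᵢ⁻¹(X \ Xᵢ⁺) ⊆ Xᵢ⁻. Then the subgroup H = ⟨g₁,…,gₙ⟩ is discrete in G. -/
/-- If `a :: L` is a reduced word, then `L` is reduced and the head of `L`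
(if any) is not the inverse letter of `a`. -/
lemma reduce_cons_eq {α : Type*} [DecidableEq α] {a : α × Bool} {L : List (α × Bool)}
    (h : FreeGroup.reduce (a :: L) = a :: L) :
    FreeGroup.reduce L = L ∧ ∀ b ∈ L.head?, ¬(a.1 = b.1 ∧ a.2 = !b.2) := by
  rw [FreeGroup.reduce.cons] at h
  rcases hr : FreeGroup.reduce L with _ | ⟨b, L'⟩
  · rw [hr] at h
    simp only at h
    have hL : L = [] := by
      cases L with
      | nil => rfl
      | cons c L' => simp at h
    subst hL
    simp
  · rw [hr] at h
    simp only at h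
    by_cases hc : a.1 = b.1 ∧ a.2 = !b.2
    · rw [if_pos hc] at h
      exfalso
      have h1 := congrArg List.length h
      have h2 : (FreeGroup.reduce L).length ≤ L.length :=
        (FreeGroup.reduce.red (L := L)).length_le
      rw [hr] at h2
      simp at h1 h2
      omega
    · rw [if_neg hc] at h
      have hL : L = b :: L' := by
        injection h with h1 h2
        exact h2.symm
      subst hL
      refine ⟨rfl, ?_⟩
      intro c hc'
      simp only [List.head?] at hc'
      injection hc' with hc'
      subst hc'
      exact hc

/-- **Ping Pong Lemma (discreteness).** If a topological group `G` acts continuously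
on a topological space `X`, the elements `g i` are nontrivial, and there are nonempty
pairwise disjoint *closed* subsets `Xp i`, `Xm i` which do not cover `X` and satisfy
the ping-pong conditions, then the subgroup generated by the `g i` is discrete. -/
theorem ping_pong_discrete {G X : Type*} [Group G] [TopologicalSpace G]
    [IsTopologicalGroup G] [TopologicalSpace X] [MulAction G X] [ContinuousSMul G X]
    {n : ℕ} (g : Fin n → G) (hg : ∀ i, g i ≠ 1)
    (Xp Xm : Fin n → Set X)
    (hnep : ∀ i, (Xp i).Nonempty) (hnem : ∀ i, (Xm i).Nonempty)
    (hclp : ∀ i, IsClosed (Xp i)) (hclm : ∀ i, IsClosed (Xm i))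
    (hdisj : Pairwise (Function.onFun Disjoint
      (fun ib : Fin n × Bool => if ib.2 then Xp ib.1 else Xm ib.1)))
    (hcov : (⋃ ib : Fin n × Bool, if ib.2 then Xp ib.1 else Xm ib.1) ≠ Set.univ)
    (hpp₁ : ∀ i, ∀ x ∉ Xm i, g i • x ∈ Xp i)
    (hpp₂ : ∀ i, ∀ x ∉ Xp i, (g i)⁻¹ • x ∈ Xm i) :
    DiscreteTopology (Subgroup.closure (Set.range g) : Subgroup G) := by
  classical
  set S : Fin n × Bool → Set X := fun ib => if ib.2 then Xp ib.1 else Xm ib.1 with hS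
  -- pick a point outside all the sets
  obtain ⟨x₀, hx₀⟩ : ∃ x₀, ∀ ib, x₀ ∉ S ib := by
    have : (⋃ ib, S ib) ≠ Set.univ := hcov
    rcases Set.nonempty_compl.2 this with ⟨x, hx⟩
    exact ⟨x, fun ib hib => hx (Set.mem_iUnion.2 ⟨ib, hib⟩)⟩
  -- the letter-to-element map
  set φf : Fin n × Bool → G := fun p => if p.2 then g p.1 else (g p.1)⁻¹ with hφf
  -- key ping-pong lemma on reduced words
  have key : ∀ L : List (Fin n × Bool), FreeGroup.reduce L = L →
      ∀ a ∈ L.head?, (L.map φf).prod • x₀ ∈ S a := by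
    intro L
    induction L with
    | nil => intro _ a ha; simp at ha
    | cons a L ih =>
      intro hred b hb
      simp only [List.head?] at hb
      injection hb with hb
      subst hb
      obtain ⟨hredL, hhead⟩ := reduce_cons_eq hred
      rw [List.map_cons, List.prod_cons, mul_smul]
      set y := (L.map φf).prod • x₀ with hy
      have hynot : y ∉ S (a.1, !a.2) := by
        rcases L with _ | ⟨c, L'⟩
        · simpa [hy] using hx₀ (a.1, !a.2)
        · have hc : y ∈ S c := ih hredL c (by simp)
          have hne : c ≠ (a.1, !a.2) := by
            intro h
            exact hhead c (by simp) ⟨by simp [h], by simp [h]⟩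
          exact fun hmem => Set.disjoint_left.1 (hdisj hne) hc hmem
      rcases a with ⟨i, b⟩
      cases b
      · -- negative letter: y ∉ S (i, true) = Xp i, so g i⁻¹ • y ∈ Xm i
        have : y ∉ Xp i := by simpa [hS] using hynot
        simpa [hS, hφf] using hpp₂ i y this
      · have : y ∉ Xm i := by simpa [hS] using hynot
        simpa [hS, hφf] using hpp₁ i y this
  -- every nontrivial element of the closure moves x₀ into the union
  have hmove : ∀ h : G, h ∈ Subgroup.closure (Set.range g) → h ≠ 1 →
      h • x₀ ∈ ⋃ ib, S ib := by
    intro h hmem hne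
    rw [← FreeGroup.range_lift_eq_closure] at hmem
    obtain ⟨u, hu⟩ := hmem
    have hu1 : u ≠ 1 := by rintro rfl; exact hne (by simpa using hu.symm)
    have hword : u.toWord ≠ [] := fun h' => hu1 (FreeGroup.toWord_eq_nil_iff.1 h')
    have hprod : h = (u.toWord.map φf).prod := by
      conv_lhs => rw [← hu, ← FreeGroup.mk_toWord (x := u)]
      rw [FreeGroup.lift_mk]
      congr 1
      apply List.map_congr_left
      intro p _
      cases p with
      | mk i b => cases b <;> simp [hφf]
    obtain ⟨a, L, hw⟩ : ∃ a L, u.toWord = a :: L := by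
      rcases hx : u.toWord with _ | ⟨a, L⟩
      · exact absurd hx hword
      · exact ⟨a, L, rfl⟩
    have hred : FreeGroup.reduce (a :: L) = a :: L := by
      rw [← hw]; exact FreeGroup.reduce_toWord u
    have hkey := key (a :: L) hred a (by simp)
    rw [hprod, hw]
    exact Set.mem_iUnion.2 ⟨a, hkey⟩
  -- the union is closed
  have hSclosed : IsClosed (⋃ ib, S ib) := by
    apply isClosed_iUnion_of_finite
    rintro ⟨i, b⟩
    cases b
    · simpa [hS] using hclm i
    · simpa [hS] using hclp i
  -- open neighborhood of 1 in G meeting the subgroup only at 1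
  set V : Set G := (fun k : G => k • x₀) ⁻¹' (⋃ ib, S ib)ᶜ with hV
  have hVopen : IsOpen V :=
    (hSclosed.isOpen_compl).preimage (continuous_id.smul continuous_const)
  have h1V : (1 : G) ∈ V := by
    simp only [hV, Set.mem_preimage, one_smul, Set.mem_compl_iff]
    exact fun hc => by
      rcases Set.mem_iUnion.1 hc with ⟨ib, hib⟩
      exact hx₀ ib hib
  apply discreteTopology_of_isOpen_singleton_one
  have : ({1} : Set (Subgroup.closure (Set.range g) : Subgroup G)) =
      Subtype.val ⁻¹' V := by
    ext ⟨h, hh⟩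
    simp only [Set.mem_singleton_iff, Set.mem_preimage]
    constructor
    · intro h1
      have : h = 1 := by simpa using congrArg Subtype.val h1
      subst this
      exact h1V
    · intro hhV
      by_contra hne
      have hne' : h ≠ 1 := fun h' => hne (by ext; simpa using h')
      exact hhV (hmove h hh hne')
  rw [this]
  exact hVopen.preimage continuous_subtype_val
end

section
/- Under the hypotheses of the ping pong lemma (nonempty pairwise disjoint subsets X₁⁺, X₁⁻, …, Xₙ⁺, Xₙ⁻ of X not covering X, with gᵢ(X \ Xᵢ⁻) ⊆ Xᵢ⁺ and gᵢ⁻¹(X \ Xᵢ⁺) ⊆ Xᵢ⁻ for all i), any nonempty reduced word w in g₁,…,gₙ sends every point x ∈ X \ (X₁⁺ ∪ X₁⁻ ∪ ⋯ ∪ Xₙ⁺ ∪ Xₙ⁻) into X₁⁺ ∪ X₁⁻ ∪ ⋯ ∪ Xₙ⁺ ∪ Xₙ⁻; in particular w acts nontrivially on X. -/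
/-- If `a :: L` is a reduced word, then `L` is reduced and `a` does not cancel
with the head of `L`. -/
lemma reduced_cons_aux {α : Type*} [DecidableEq α] {a : α × Bool} {L : List (α × Bool)}
    (h : FreeGroup.reduce (a :: L) = a :: L) :
    FreeGroup.reduce L = L ∧ ∀ hd tl, L = hd :: tl → ¬(a.1 = hd.1 ∧ a.2 = !hd.2) := by
  rw [FreeGroup.reduce.cons] at h
  rcases hL : FreeGroup.reduce L with _ | ⟨hd, tl⟩
  · rw [hL] at h
    simp only [List.casesOn] at h
    injection h with h1 h2
    subst h2
    exact ⟨rfl, fun hd tl h' => by simp at h'⟩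
  · rw [hL] at h
    simp only at h
    split_ifs at h with hc
    · exfalso
      have h1 : (FreeGroup.reduce L).length ≤ L.length :=
        (FreeGroup.reduce.red (L := L)).length_le
      rw [hL] at h1
      have h2 := congrArg List.length h
      simp at h2 h1
      omega
    · have hLeq : L = hd :: tl := by injection h with h1 h2; exact h2.symm
      constructor
      · rw [hLeq, ← hL]
      · rintro hd' tl' h' ⟨h1, h2⟩
        rw [hLeq] at h'
        injection h' with e1 e2
        subst e1
        exact hc ⟨h1, h2⟩

/-- **Ping Pong Lemma (key step).** Under the ping-pong hypotheses, every nontrivial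
reduced word `w` in the generators (i.e. every nontrivial element of the free group,
mapped into `G` by the canonical lift) sends each point outside
`Y = ⋃ᵢ (Xp i ∪ Xm i)` into `Y`; in particular `w` acts nontrivially on `X`. -/
theorem ping_pong_word {G X : Type*} [Group G] [MulAction G X] {n : ℕ}
    (g : Fin n → G) (hg : ∀ i, g i ≠ 1)
    (Xp Xm : Fin n → Set X)
    (hnep : ∀ i, (Xp i).Nonempty) (hnem : ∀ i, (Xm i).Nonempty)
    (hdisj : Pairwise (Function.onFun Disjoint
      (fun ib : Fin n × Bool => if ib.2 then Xp ib.1 else Xm ib.1)))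
    (hcov : (⋃ ib : Fin n × Bool, if ib.2 then Xp ib.1 else Xm ib.1) ≠ Set.univ)
    (hpp₁ : ∀ i, ∀ x ∉ Xm i, g i • x ∈ Xp i)
    (hpp₂ : ∀ i, ∀ x ∉ Xp i, (g i)⁻¹ • x ∈ Xm i)
    (w : FreeGroup (Fin n)) (hw : w ≠ 1)
    (x : X) (hx : x ∉ ⋃ ib : Fin n × Bool, if ib.2 then Xp ib.1 else Xm ib.1) :
    (FreeGroup.lift g w) • x ∈ (⋃ ib : Fin n × Bool, if ib.2 then Xp ib.1 else Xm ib.1)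
      ∧ (FreeGroup.lift g w) • x ≠ x := by
  set S : Fin n × Bool → Set X := fun ib => if ib.2 then Xp ib.1 else Xm ib.1 with hS
  have hxS : ∀ ib, x ∉ S ib := by
    intro ib hmem
    exact hx (Set.mem_iUnion.mpr ⟨ib, hmem⟩)
  -- key claim by induction on the reduced word
  have key : ∀ (L : List (Fin n × Bool)) (i : Fin n) (b : Bool),
      FreeGroup.reduce ((i, b) :: L) = (i, b) :: L →
      (FreeGroup.lift g (FreeGroup.mk ((i, b) :: L))) • x ∈ S (i, b) := by
    intro L
    induction L with
    | nil =>
      intro i b _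
      have : FreeGroup.lift g (FreeGroup.mk [(i, b)]) = cond b (g i) (g i)⁻¹ := by
        rw [FreeGroup.lift_mk]; simp
      rw [this]
      cases b with
      | true =>
        simp only [hS, cond_true]
        have := hxS (i, false)
        simp only [hS] at this
        simpa using hpp₁ i x (by simpa using this)
      | false =>
        simp only [hS, cond_false]
        have := hxS (i, true)
        simp only [hS] at this
        simpa using hpp₂ i x (by simpa using this)
    | cons a L ih =>
      obtain ⟨j, c⟩ := a
      intro i b hred
      obtain ⟨hred', hnc⟩ := reduced_cons_aux hred
      have hy : (FreeGroup.lift g (FreeGroup.mk ((j, c) :: L))) • x ∈ S (j, c) :=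
        ih j c hred'
      set y := (FreeGroup.lift g (FreeGroup.mk ((j, c) :: L))) • x with hy_def
      have hne : ¬(i = j ∧ b = !c) := by
        have := hnc (j, c) L rfl
        simpa using this
      have hsplit : FreeGroup.lift g (FreeGroup.mk ((i, b) :: (j, c) :: L)) • x
          = (cond b (g i) (g i)⁻¹) • y := by
        have : FreeGroup.mk ((i, b) :: (j, c) :: L)
            = FreeGroup.mk [(i, b)] * FreeGroup.mk ((j, c) :: L) := by
          rw [FreeGroup.mul_mk]; rfl
        rw [this, map_mul, mul_smul, hy_def]
        congr 1
        rw [FreeGroup.lift_mk]; simp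
      rw [hsplit]
      cases b with
      | true =>
        have hne' : (j, c) ≠ ((i : Fin n), (false : Bool)) := by
          intro he
          rw [Prod.mk.injEq] at he
          exact hne ⟨he.1.symm, by simp [he.2]⟩
        have hdis := hdisj hne'
        have hyn : y ∉ S (i, false) := fun hmem =>
          (Set.disjoint_left.mp hdis hy) hmem
        simp only [hS, if_neg Bool.false_ne_true] at hyn
        simp only [hS, cond_true, if_pos rfl]
        simpa using hpp₁ i y (by simpa using hyn)
      | false =>
        have hne' : (j, c) ≠ ((i : Fin n), (true : Bool)) := by
          intro he
          rw [Prod.mk.injEq] at he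
          exact hne ⟨he.1.symm, by simp [he.2]⟩
        have hdis := hdisj hne'
        have hyn : y ∉ S (i, true) := fun hmem =>
          (Set.disjoint_left.mp hdis hy) hmem
        simp only [hS, if_pos rfl] at hyn
        simp only [hS, cond_false]
        simpa using hpp₂ i y (by simpa using hyn)
  -- apply to w
  have htw : FreeGroup.mk w.toWord = w := FreeGroup.mk_toWord
  have hwred : FreeGroup.reduce w.toWord = w.toWord := FreeGroup.reduce_toWord w
  rcases hL : w.toWord with _ | ⟨⟨i, b⟩, L⟩
  · exact absurd (FreeGroup.toWord_eq_nil_iff.mp hL) hw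
  · rw [hL] at htw hwred
    have hmem : (FreeGroup.lift g w) • x ∈ S (i, b) := by
      rw [← htw]; exact key L i b hwred
    constructor
    · exact Set.mem_iUnion.mpr ⟨(i, b), hmem⟩
    · intro heq
      exact hxS (i, b) (heq ▸ hmem)
end

section
/- Let T be a metric tree (a 0-hyperbolic geodesic space, which is CAT(0)) and let g₁,…,gₙ be hyperbolic isometries of T with pairwise distinct axes A₁,…,Aₙ such that each pairwise intersection Aᵢ ∩ Aⱼ is a single point or a bounded segment, and for each i the union of the projections of the other axes onto Aᵢ is contained in an open segment of Aᵢ of length equal to the translation length of gᵢ. Then ⟨g₁,…,gₙ⟩ is free of rank n. -/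
open Real Filter Set

variable {X : Type*} [MetricSpace X]

/-- `γ` restricted to `[a,b]` is a unit-speed geodesic segment. -/
def IsGeodSeg {X : Type*} [MetricSpace X] (γ : ℝ → X) (a b : ℝ) : Prop :=
  ∀ s ∈ Set.Icc a b, ∀ t ∈ Set.Icc a b, dist (γ s) (γ t) = |s - t|

/-- Every pair of points is joined by a geodesic segment. -/
def GeodesicSpace (X : Type*) [MetricSpace X] : Prop :=
  ∀ x y : X, ∃ γ : ℝ → X, γ 0 = x ∧ γ (dist x y) = y ∧ IsGeodSeg γ 0 (dist x y)

/-- `X` is CAT(0): it is geodesic and satisfies the (equivalent) convexity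
form of the comparison inequality along every geodesic segment. -/
def CAT0 (X : Type*) [MetricSpace X] : Prop :=
  GeodesicSpace X ∧
  ∀ (x : X) (γ : ℝ → X) (a b : ℝ), IsGeodSeg γ a b →
    ∀ t ∈ Set.Icc (0:ℝ) 1,
      dist x (γ (a + t * (b - a))) ^ 2 ≤
        (1 - t) * dist x (γ a) ^ 2 + t * dist x (γ b) ^ 2
          - t * (1 - t) * dist (γ a) (γ b) ^ 2

/-- Euclidean comparison angle at `p` in the comparison triangle of `(p, x, q)`. -/
noncomputable def compAngle {X : Type*} [MetricSpace X] (p x q : X) : ℝ :=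
  Real.arccos ((dist p x ^ 2 + dist p q ^ 2 - dist x q ^ 2) / (2 * dist p x * dist p q))

/-- The Alexandrov (upper) angle at `γ₁ 0 = γ₂ 0` between the geodesics `γ₁` and `γ₂`. -/
noncomputable def alexAngle {X : Type*} [MetricSpace X] (γ₁ γ₂ : ℝ → X) : ℝ :=
  Filter.limsup (fun st : ℝ × ℝ => compAngle (γ₁ 0) (γ₁ st.1) (γ₂ st.2))
    ((nhdsWithin 0 (Set.Ioi 0)) ×ˢ (nhdsWithin 0 (Set.Ioi 0)))

/-- `p` is the nearest-point projection onto `A`. -/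
def IsNearestPtProj {X : Type*} [MetricSpace X] (A : Set X) (p : X → X) : Prop :=
  ∀ x, p x ∈ A ∧ ∀ a ∈ A, dist x (p x) ≤ dist x a

/-- `A` is geodesically convex. -/
def GeodConvex {X : Type*} [MetricSpace X] (A : Set X) : Prop :=
  ∀ (γ : ℝ → X) (a b : ℝ), IsGeodSeg γ a b → γ a ∈ A → γ b ∈ A →
    ∀ t ∈ Set.Icc a b, γ t ∈ A

/-- `γ` is an axis of the hyperbolic isometry `g` with translation length `ℓ > 0`:
`γ` is a geodesic line, invariant under `g`, on which `g` translates by `ℓ`. -/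
def IsAxisOf {X : Type*} [MetricSpace X] (g : X ≃ᵢ X) (γ : ℝ → X) (ℓ : ℝ) : Prop :=
  Isometry γ ∧ (∀ t : ℝ, g (γ t) = γ (t + ℓ)) ∧ 0 < ℓ


/-- `X` is 0-hyperbolic (four-point condition). -/
def ZeroHyperbolic (X : Type*) [MetricSpace X] : Prop :=
  ∀ x y z w : X,
    dist x y + dist z w ≤ max (dist x z + dist y w) (dist x w + dist y z)

/-- `X` is a metric (ℝ-)tree: a geodesic, 0-hyperbolic metric space. -/
def IsRTree (X : Type*) [MetricSpace X] : Prop :=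
  GeodesicSpace X ∧ ZeroHyperbolic X

lemma btw_proj (hZ : ZeroHyperbolic X) {γ : ℝ → X} (hγ : Isometry γ) {p : X → X}
    (hp : IsNearestPtProj (Set.range γ) p) (y : X) {a : X} (ha : a ∈ Set.range γ) :
    dist y (p y) + dist (p y) a = dist y a := by
  obtain ⟨s, hs⟩ := (hp y).1
  obtain ⟨t, ht⟩ := ha
  set α := (dist y (p y) + dist (p y) a - dist y a) / 2 with hα
  have hd1 : dist y a ≤ dist y (p y) + dist (p y) a := dist_triangle _ _ _
  have hα0 : 0 ≤ α := by simp only [hα]; linarith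
  have hpa : dist (p y) a = |s - t| := by
    rw [← hs, ← ht, hγ.dist_eq, Real.dist_eq]
  have hαle : α ≤ dist (p y) a := by
    have h2 : dist y (p y) ≤ dist y a + dist a (p y) := dist_triangle _ _ _
    rw [dist_comm a (p y)] at h2
    simp only [hα]; linarith
  set c := γ (s + (if s ≤ t then α else -α)) with hc
  have hcmem : c ∈ Set.range γ := ⟨_, rfl⟩
  have hpc : dist (p y) c = α := by
    rw [← hs, hc, hγ.dist_eq, Real.dist_eq]
    split_ifs <;> simp [abs_of_nonneg hα0]
  have hca : dist c a = dist (p y) a - α := by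
    have h1 : dist c a = |(s + (if s ≤ t then α else -α)) - t| := by
      rw [← ht, hc, hγ.dist_eq, Real.dist_eq]
    rw [h1, hpa] at *
    split_ifs with h
    · rw [abs_of_nonpos (by rw [abs_of_nonpos (by linarith)] at hαle; linarith),
        abs_of_nonpos (by linarith)]
      ring
    · rw [abs_of_nonneg (by rw [abs_of_nonneg (by linarith)] at hαle; linarith),
        abs_of_nonneg (by linarith)]
      ring
  have hcp : dist c (p y) = α := by rw [dist_comm]; exact hpc
  have h4 := hZ y c (p y) a
  have hyc : dist y (p y) ≤ dist y c := (hp y).2 c hcmem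
  have hle : α ≤ 0 := by
    rcases le_max_iff.mp h4 with h | h <;> linarith [hα, hpc, hcp, hca, hyc]
  have : α = 0 := le_antisymm hle hα0
  simp only [hα] at this; linarith

lemma proj_self {A : Set X} {p : X → X} (hp : IsNearestPtProj A p) {x : X} (hx : x ∈ A) :
    p x = x := by
  have h := (hp x).2 x hx
  simp only [dist_self] at h
  exact (dist_eq_zero.mp (le_antisymm h dist_nonneg)).symm

lemma btw_branch (hZ : ZeroHyperbolic X) {y q z : X} (r : X)
    (h : dist y q + dist q z = dist y z) :
    dist y q + dist q r = dist y r ∨ dist r q + dist q z = dist r z := by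
  have h4 := hZ y z r q
  have t1 : dist y r ≤ dist y q + dist q r := dist_triangle _ _ _
  have t2 : dist r z ≤ dist r q + dist q z := dist_triangle _ _ _
  have c1 : dist z q = dist q z := dist_comm _ _
  have c2 : dist z r = dist r z := dist_comm _ _
  have c3 : dist r q = dist q r := dist_comm _ _
  rcases le_max_iff.mp h4 with h' | h'
  · left; linarith
  · right; linarith

lemma proj_factor (hZ : ZeroHyperbolic X) {γA γB : ℝ → X} (hA : Isometry γA)
    (hB : Isometry γB) {pA pB : X → X}
    (hpA : IsNearestPtProj (Set.range γA) pA) (hpB : IsNearestPtProj (Set.range γB) pB)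
    (y : X) (h : pB y ∉ pB '' Set.range γA) : pA y = pA (pB y) := by
  have h1 : dist y (pB y) + dist (pB y) (pB (pA y)) = dist y (pB (pA y)) :=
    btw_proj hZ hB hpB y (hpB (pA y)).1
  rcases btw_branch hZ (pA y) h1 with h2 | h2
  · -- pB y between y and pA y
    have h3 : dist y (pA y) + dist (pA y) (pA (pB y)) = dist y (pA (pB y)) :=
      btw_proj hZ hA hpA y (hpA (pB y)).1
    have h4 : dist (pB y) (pA (pB y)) ≤ dist (pB y) (pA y) := (hpA (pB y)).2 _ (hpA y).1
    have htri : dist y (pA (pB y)) ≤ dist y (pB y) + dist (pB y) (pA (pB y)) :=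
      dist_triangle _ _ _
    have : dist (pA y) (pA (pB y)) = 0 :=
      le_antisymm (by linarith) dist_nonneg
    exact dist_eq_zero.mp this
  · exfalso
    have h5 : dist (pA y) (pB (pA y)) ≤ dist (pA y) (pB y) := (hpB (pA y)).2 _ (hpB y).1
    have : dist (pB y) (pB (pA y)) = 0 := le_antisymm (by linarith) dist_nonneg
    exact h ⟨pA y, (hpA y).1, (dist_eq_zero.mp this).symm⟩

lemma proj_comm (hZ : ZeroHyperbolic X) {γ : ℝ → X} (hγ : Isometry γ) {p : X → X}
    (hp : IsNearestPtProj (Set.range γ) p) (e : X ≃ᵢ X)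
    (h1 : ∀ x ∈ Set.range γ, e x ∈ Set.range γ)
    (h2 : ∀ x ∈ Set.range γ, e.symm x ∈ Set.range γ) (x : X) :
    p (e x) = e (p x) := by
  have hmem : e (p x) ∈ Set.range γ := h1 _ (hp x).1
  have hb : dist (e x) (p (e x)) + dist (p (e x)) (e (p x)) = dist (e x) (e (p x)) :=
    btw_proj hZ hγ hp (e x) hmem
  have hle : dist (e x) (e (p x)) ≤ dist (e x) (p (e x)) := by
    rw [e.dist_eq]
    have hm2 : e.symm (p (e x)) ∈ Set.range γ := h2 _ (hp (e x)).1
    have := (hp x).2 _ hm2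
    have key : dist (e x) (p (e x)) = dist x (e.symm (p (e x))) := by
      conv_lhs => rw [← e.apply_symm_apply (p (e x))]
      rw [e.dist_eq]
    rwa [← key] at this
  have : dist (p (e x)) (e (p x)) = 0 := le_antisymm (by linarith) dist_nonneg
  exact dist_eq_zero.mp this

lemma chain'_of_reduce {α : Type*} [DecidableEq α] {L : List (α × Bool)}
    (h : FreeGroup.reduce L = L) :
    List.Chain' (fun s t : α × Bool => ¬(s.1 = t.1 ∧ t.2 = !s.2)) L := by
  rw [List.Chain', List.isChain_iff_getElem]
  intro i hi
  by_contra hbad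
  obtain ⟨h1, h2⟩ := hbad
  have e2 : L.get ⟨i + 1, by omega⟩ = ((L.get ⟨i, by omega⟩).1, !(L.get ⟨i, by omega⟩).2) :=
    Prod.ext h1.symm h2
  have e1 : L.get ⟨i, by omega⟩ = ((L.get ⟨i, by omega⟩).1, (L.get ⟨i, by omega⟩).2) := rfl
  have hdec : L = L.take i ++ (L.get ⟨i, by omega⟩) :: (L.get ⟨i + 1, by omega⟩) ::
      L.drop (i + 2) := by
    conv_lhs => rw [← List.take_append_drop i L]
    rw [List.drop_eq_getElem_cons (show i < L.length by omega),
      List.drop_eq_getElem_cons (show i + 1 < L.length by omega)]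
    simp [List.get_eq_getElem]
  rw [e2, e1] at hdec
  exact FreeGroup.reduce.not (h.trans hdec)

/-- **Schottky lemma for trees.** Hyperbolic isometries of a metric tree with pairwise
distinct axes, whose pairwise intersections are points or bounded segments, and whose
projections onto each axis lie in an open fundamental segment, generate a free group of
rank `n`. -/
theorem tree_schottky_free {X : Type*} [MetricSpace X] (hX : IsRTree X)
    {n : ℕ} (g : Fin n → X ≃ᵢ X)
    (γ : Fin n → ℝ → X) (ℓ : Fin n → ℝ)
    (hax : ∀ i, IsAxisOf (g i) (γ i) (ℓ i))
    (hdistinct : ∀ i j : Fin n, i ≠ j → Set.range (γ i) ≠ Set.range (γ j))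
    (hint : ∀ i j : Fin n, i ≠ j → ∃ a b : ℝ, a ≤ b ∧
      Set.range (γ i) ∩ Set.range (γ j) = γ i '' Set.Icc a b)
    (p : Fin n → X → X) (hp : ∀ i, IsNearestPtProj (Set.range (γ i)) (p i))
    (hD : ∀ i : Fin n, ∃ a : ℝ, ∀ j : Fin n, j ≠ i →
      p i '' Set.range (γ j) ⊆ γ i '' Set.Ioo a (a + ℓ i)) :
    Function.Injective (FreeGroup.lift g : FreeGroup (Fin n) →* (X ≃ᵢ X)) := by
  obtain ⟨-, hZ⟩ := hX
  choose a ha using hD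
  have hγ : ∀ i, Isometry (γ i) := fun i => (hax i).1
  have hγinj : ∀ i, Function.Injective (γ i) := fun i => (hγ i).injective
  have hgf : ∀ i t, g i (γ i t) = γ i (t + ℓ i) := fun i => (hax i).2.1
  have hℓ : ∀ i, 0 < ℓ i := fun i => (hax i).2.2
  have hgs : ∀ i t, (g i).symm (γ i t) = γ i (t - ℓ i) := by
    intro i t
    apply (g i).injective
    rw [(g i).apply_symm_apply, hgf]
    ring_nf
  have hmap1 : ∀ i, ∀ x ∈ Set.range (γ i), g i x ∈ Set.range (γ i) := by
    rintro i x ⟨t, rfl⟩; exact ⟨t + ℓ i, (hgf i t).symm⟩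
  have hmap2 : ∀ i, ∀ x ∈ Set.range (γ i), (g i).symm x ∈ Set.range (γ i) := by
    rintro i x ⟨t, rfl⟩; exact ⟨t - ℓ i, (hgs i t).symm⟩
  have hex : ∀ (i : Fin n) (x : X), ∃ v : ℝ, p i x = γ i v := by
    intro i x; obtain ⟨v, hv⟩ := (hp i x).1; exact ⟨v, hv.symm⟩
  choose u hu using hex
  have hshift : ∀ i x, u i (g i x) = u i x + ℓ i := by
    intro i x
    apply hγinj i
    rw [← hu, proj_comm hZ (hγ i) (hp i) (g i) (hmap1 i) (hmap2 i), hu, hgf]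
  have hshift' : ∀ i x, u i ((g i)⁻¹ x) = u i x - ℓ i := by
    intro i x
    apply hγinj i
    have hm2 : ∀ y ∈ Set.range (γ i), ((g i).symm).symm y ∈ Set.range (γ i) := by
      simpa using hmap1 i
    have hcoe : ((g i)⁻¹ : X ≃ᵢ X) x = (g i).symm x := rfl
    rw [← hu, hcoe, proj_comm hZ (hγ i) (hp i) (g i).symm (hmap2 i) hm2, hu, hgs]
  have hcross : ∀ (i j : Fin n) (x : X), j ≠ i →
      (u i x ≤ a i ∨ a i + ℓ i ≤ u i x) →
      a j < u j x ∧ u j x < a j + ℓ j := by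
    intro i j x hij hout
    have hnot : p i x ∉ p i '' Set.range (γ j) := by
      intro hmem
      obtain ⟨v, hv, hv2⟩ := ha i j hij hmem
      have hvu : v = u i x := hγinj i (hv2.trans (hu i x))
      rw [hvu] at hv
      rcases hout with h | h
      · exact absurd hv.1 (by linarith)
      · exact absurd hv.2 (by linarith)
    have hfac := proj_factor hZ (hγ j) (hγ i) (hp j) (hp i) x hnot
    have hmem : p j (p i x) ∈ γ j '' Set.Ioo (a j) (a j + ℓ j) :=
      ha j i (fun h => hij h.symm) ⟨p i x, (hp i x).1, rfl⟩
    rw [← hfac] at hmem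
    obtain ⟨v, hv, hv2⟩ := hmem
    have hvu : v = u j x := hγinj j (hv2.trans (hu j x))
    rw [hvu] at hv
    exact ⟨hv.1, hv.2⟩
  -- word argument
  rw [injective_iff_map_eq_one]
  intro w hw
  by_contra hne
  have hLne : w.toWord ≠ [] := fun h => hne (FreeGroup.toWord_eq_nil_iff.mp h)
  obtain ⟨hd, tl, hL⟩ := List.exists_cons_of_ne_nil hLne
  set x0 := γ hd.1 (a hd.1 + ℓ hd.1 / 2) with hx0def
  have hx0 : ∀ i : Fin n, a i < u i x0 ∧ u i x0 < a i + ℓ i := by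
    intro i
    by_cases hih : i = hd.1
    · subst hih
      have hpx : p hd.1 x0 = x0 := proj_self (hp hd.1) ⟨_, rfl⟩
      have hux : u hd.1 x0 = a hd.1 + ℓ hd.1 / 2 := hγinj hd.1 (by rw [← hu, hpx, hx0def])
      rw [hux]
      constructor <;> linarith [hℓ hd.1]
    · have hmem : p i x0 ∈ γ i '' Set.Ioo (a i) (a i + ℓ i) :=
        ha i hd.1 (fun h => hih h.symm) ⟨x0, ⟨_, rfl⟩, rfl⟩
      obtain ⟨v, hv, hv2⟩ := hmem
      have hvu : v = u i x0 := hγinj i (hv2.trans (hu i x0))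
      rw [hvu] at hv
      exact hv
  set F : Fin n × Bool → X ≃ᵢ X := fun l => cond l.2 (g l.1) (g l.1)⁻¹ with hF
  have main : ∀ M : List (Fin n × Bool),
      List.Chain' (fun s t : Fin n × Bool => ¬(s.1 = t.1 ∧ t.2 = !s.2)) M →
      ∀ l tl', M = l :: tl' →
      (l.2 = true → a l.1 + ℓ l.1 < u l.1 (((M.map F).prod) x0)) ∧
      (l.2 = false → u l.1 (((M.map F).prod) x0) < a l.1) := by
    intro M
    induction M with
    | nil => intro _ l tl' h; exact absurd h (by simp)
    | cons hd2 tl2 IH =>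
      intro hch l tl' heq
      injection heq with h1 h2
      subst h1; subst h2
      set y := ((tl2.map F).prod) x0 with hy
      have happ : (((hd2 :: tl2).map F).prod) x0 = F hd2 y := by
        rw [List.map_cons, List.prod_cons]; rfl
      have hpre : (hd2.2 = true → a hd2.1 < u hd2.1 y) ∧
          (hd2.2 = false → u hd2.1 y < a hd2.1 + ℓ hd2.1) := by
        match tl2, hch with
        | [], _ =>
          have : y = x0 := by simp [hy]
          rw [this]
          exact ⟨fun _ => (hx0 hd2.1).1, fun _ => (hx0 hd2.1).2⟩
        | l2 :: tl3, hch =>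
          have hR : ¬(hd2.1 = l2.1 ∧ l2.2 = !hd2.2) := (List.isChain_cons_cons.mp hch).1
          have hch2 := (List.isChain_cons_cons.mp hch).2
          have hIH := IH hch2 l2 tl3 rfl
          by_cases hii : hd2.1 = l2.1
          · have hbb : l2.2 = hd2.2 := by
              rcases Bool.eq_false_or_eq_true hd2.2 with hb | hb <;>
                rcases Bool.eq_false_or_eq_true l2.2 with hb2 | hb2 <;>
                  simp [hb, hb2] at hR ⊢ <;> exact hR hii
            rw [hii]
            constructor
            · intro hbt
              have := hIH.1 (by rw [hbb]; exact hbt)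
              linarith [hℓ l2.1]
            · intro hbf
              have := hIH.2 (by rw [hbb]; exact hbf)
              linarith [hℓ l2.1]
          · have hout : u l2.1 y ≤ a l2.1 ∨ a l2.1 + ℓ l2.1 ≤ u l2.1 y := by
              rcases Bool.eq_false_or_eq_true l2.2 with hb | hb
              · exact Or.inr (le_of_lt (hIH.1 hb))
              · exact Or.inl (le_of_lt (hIH.2 hb))
            have := hcross l2.1 hd2.1 y hii hout
            exact ⟨fun _ => this.1, fun _ => this.2⟩
      rw [happ]
      constructor
      · intro hbt
        have hFe : F hd2 = g hd2.1 := by rw [hF]; simp [hbt]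
        rw [hFe, hshift]
        have := hpre.1 hbt
        linarith
      · intro hbf
        have hFe : F hd2 = (g hd2.1)⁻¹ := by rw [hF]; simp [hbf]
        rw [hFe, hshift']
        have := hpre.2 hbf
        linarith
  have hred := chain'_of_reduce (FreeGroup.reduce_toWord w)
  rw [hL] at hred
  have hmain := main (hd :: tl) hred hd tl rfl
  have hact : (((hd :: tl).map F).prod) = FreeGroup.lift g w := by
    rw [← hL, ← FreeGroup.lift_mk, FreeGroup.mk_toWord]
  rw [hact, hw] at hmain
  obtain ⟨h1, h2⟩ := hx0 hd.1
  have hone : ((1 : X ≃ᵢ X)) x0 = x0 := rfl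
  rcases Bool.eq_false_or_eq_true hd.2 with hb | hb
  · have := hmain.1 hb; rw [hone] at this; linarith [hℓ hd.1]
  · have := hmain.2 hb; rw [hone] at this; linarith
end

section
/- The matrices A = [[1,2],[0,1]] and B = [[1,0],[2,1]] generate a free subgroup of rank 2 in SL₂(ℤ). -/
abbrev SanovV := {v : Fin 2 → ℤ // v ≠ 0}

local notation "SL2Z" => Matrix.SpecialLinearGroup (Fin 2) ℤ

instance : SMul SL2Z SanovV :=
  ⟨fun g v => ⟨g.1.mulVec v.1, fun h => v.2 (by
    have h2 : (g⁻¹).1.mulVec (g.1.mulVec v.1) = (g⁻¹).1.mulVec 0 := by rw [h]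
    rwa [Matrix.mulVec_mulVec, Matrix.mulVec_zero, ← Matrix.SpecialLinearGroup.coe_mul,
      inv_mul_cancel, Matrix.SpecialLinearGroup.coe_one, Matrix.one_mulVec] at h2)⟩⟩

lemma sanov_smul_val (g : SL2Z) (v : SanovV) :
    (g • v).1 = g.1.mulVec v.1 := rfl

instance : MulAction SL2Z SanovV where
  one_smul v := Subtype.ext (by
    rw [sanov_smul_val, Matrix.SpecialLinearGroup.coe_one, Matrix.one_mulVec])
  mul_smul g h v := Subtype.ext (by
    rw [sanov_smul_val, sanov_smul_val, sanov_smul_val,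
      Matrix.SpecialLinearGroup.coe_mul, Matrix.mulVec_mulVec])

def sA : SL2Z := ⟨!![1, 2; 0, 1], by decide⟩
def sB : SL2Z := ⟨!![1, 0; 2, 1], by decide⟩

lemma sA_inv : sA⁻¹ = (⟨!![1, -2; 0, 1], by decide⟩ : SL2Z) := by
  apply inv_eq_of_mul_eq_one_right
  exact Subtype.ext (by decide)

lemma sB_inv : sB⁻¹ = (⟨!![1, 0; -2, 1], by decide⟩ : SL2Z) := by
  apply inv_eq_of_mul_eq_one_right
  exact Subtype.ext (by decide)

lemma sA_smul (v : SanovV) : (sA • v).1 = ![v.1 0 + 2 * v.1 1, v.1 1] := by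
  rw [sanov_smul_val]
  funext i
  fin_cases i <;> simp [sA, Matrix.mulVec, dotProduct, Fin.sum_univ_two]

lemma sAi_smul (v : SanovV) : (sA⁻¹ • v).1 = ![v.1 0 - 2 * v.1 1, v.1 1] := by
  rw [sanov_smul_val, sA_inv]
  funext i
  fin_cases i <;> (simp [Matrix.mulVec, dotProduct, Fin.sum_univ_two]; try ring)

lemma sB_smul (v : SanovV) : (sB • v).1 = ![v.1 0, 2 * v.1 0 + v.1 1] := by
  rw [sanov_smul_val]
  funext i
  fin_cases i <;> simp [sB, Matrix.mulVec, dotProduct, Fin.sum_univ_two]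

lemma sBi_smul (v : SanovV) : (sB⁻¹ • v).1 = ![v.1 0, v.1 1 - 2 * v.1 0] := by
  rw [sanov_smul_val, sB_inv]
  funext i
  fin_cases i <;> (simp [Matrix.mulVec, dotProduct, Fin.sum_univ_two]; try ring)

lemma sanov_ne (v : SanovV) : ¬(v.1 0 = 0 ∧ v.1 1 = 0) := by
  rintro ⟨h0, h1⟩
  exact v.2 (funext fun i => by fin_cases i <;> assumption)

lemma pingXA (x y : ℤ) (h : ¬(x*y < 0 ∧ y^2 < x^2)) :
    0 ≤ (x+2*y)*y ∧ y^2 ≤ (x+2*y)^2 := by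
  push_neg at h
  rcases lt_or_ge (x*y) 0 with hxy | hxy
  · have h2 := h hxy
    constructor <;> nlinarith [sq_nonneg (x+y), sq_nonneg y]
  · constructor <;> nlinarith [sq_nonneg (x+y), sq_nonneg y]

lemma pingYA (x y : ℤ) (h : ¬(0 ≤ x*y ∧ y^2 ≤ x^2)) :
    (x-2*y)*y < 0 ∧ y^2 < (x-2*y)^2 := by
  push_neg at h
  rcases lt_or_ge (x*y) 0 with hxy | hxy
  · have hy : y ≠ 0 := fun hy => by simp [hy] at hxy
    have hy2 : 0 < y^2 := by positivity
    constructor <;> nlinarith [sq_nonneg (x-y)]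
  · have h2 := h hxy
    have hy : y ≠ 0 := fun hy => by simp [hy] at h2; nlinarith [sq_nonneg x]
    have hy2 : 0 < y^2 := by positivity
    constructor <;> nlinarith [sq_nonneg (x-y)]

lemma pingXB (x y : ℤ) (h0 : ¬(x = 0 ∧ y = 0)) (h : ¬(x*y < 0 ∧ x^2 ≤ y^2)) :
    0 ≤ x*(2*x+y) ∧ x^2 < (2*x+y)^2 := by
  push_neg at h
  have hsq : 0 < x^2 + y^2 := by
    rcases not_and_or.mp h0 with h1 | h1 <;> positivity
  rcases lt_or_ge (x*y) 0 with hxy | hxy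
  · have h2 := h hxy
    constructor <;> nlinarith [sq_nonneg (x+y), sq_nonneg x]
  · constructor <;> nlinarith [sq_nonneg (x+y), sq_nonneg x]

lemma pingYB (x y : ℤ) (h0 : ¬(x = 0 ∧ y = 0)) (h : ¬(0 ≤ x*y ∧ x^2 < y^2)) :
    x*(y-2*x) < 0 ∧ x^2 ≤ (y-2*x)^2 := by
  push_neg at h
  rcases lt_or_ge (x*y) 0 with hxy | hxy
  · have hx : x ≠ 0 := fun hx => by simp [hx] at hxy
    have hx2 : 0 < x^2 := by positivity
    constructor <;> nlinarith [sq_nonneg (x-y)]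
  · have h2 := h hxy
    have hx : x ≠ 0 := by
      rintro rfl
      simp at h2 hxy
      exact h0 ⟨rfl, by nlinarith [sq_nonneg y]⟩
    have hx2 : 0 < x^2 := by positivity
    constructor <;> nlinarith [sq_nonneg (x-y)]



/-- **Sanov's theorem.** The matrices `[[1,2],[0,1]]` and `[[1,0],[2,1]]` freely
generate a free subgroup of rank 2 of `SL₂(ℤ)`: the canonical homomorphism from the
free group on two generators sending the generators to these matrices is injective. -/
theorem sanov_free :
    Function.Injective (FreeGroup.lift
      (fun b : Bool =>
        if b then (⟨!![1, 2; 0, 1], by decide⟩ : Matrix.SpecialLinearGroup (Fin 2) ℤ)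
        else ⟨!![1, 0; 2, 1], by decide⟩) :
      FreeGroup Bool →* Matrix.SpecialLinearGroup (Fin 2) ℤ) := by
  have hfun : (fun b : Bool =>
      if b then (⟨!![1, 2; 0, 1], by decide⟩ : Matrix.SpecialLinearGroup (Fin 2) ℤ)
      else ⟨!![1, 0; 2, 1], by decide⟩) = fun b : Bool => if b then sA else sB := rfl
  change Function.Injective (FreeGroup.lift (fun b : Bool => if b then sA else sB) :
      FreeGroup Bool →* SL2Z)
  let X : Bool → Set SanovV := fun b =>
    if b then {v | 0 ≤ v.1 0 * v.1 1 ∧ (v.1 1)^2 ≤ (v.1 0)^2}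
    else {v | 0 ≤ v.1 0 * v.1 1 ∧ (v.1 0)^2 < (v.1 1)^2}
  let Y : Bool → Set SanovV := fun b =>
    if b then {v | v.1 0 * v.1 1 < 0 ∧ (v.1 1)^2 < (v.1 0)^2}
    else {v | v.1 0 * v.1 1 < 0 ∧ (v.1 0)^2 ≤ (v.1 1)^2}
  apply FreeGroup.injective_lift_of_ping_pong _ X Y
  · -- nonempty
    intro i
    cases i
    · exact ⟨⟨![0, 1], by intro h; simpa using congrFun h 1⟩, by norm_num [X]⟩
    · exact ⟨⟨![1, 0], by intro h; simpa using congrFun h 0⟩, by norm_num [X]⟩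
  · -- X pairwise disjoint
    intro i j hij
    cases i <;> cases j <;> (try exact absurd rfl hij) <;>
      (simp only [Function.onFun]; rw [Set.disjoint_left]; rintro v ⟨h1, h2⟩ ⟨h3, h4⟩;
        linarith)
  · -- Y pairwise disjoint
    intro i j hij
    cases i <;> cases j <;> (try exact absurd rfl hij) <;>
      (simp only [Function.onFun]; rw [Set.disjoint_left]; rintro v ⟨h1, h2⟩ ⟨h3, h4⟩;
        linarith)
  · -- X Y disjoint
    intro i j
    cases i <;> cases j <;>
      (rw [Set.disjoint_left]; rintro v ⟨h1, h2⟩ ⟨h3, h4⟩;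
        linarith)
  · -- hX
    intro i z hz
    obtain ⟨v, hv, rfl⟩ := hz
    cases i
    · -- false : B
      show sB • v ∈ X false
      have hvmem : ¬(v.1 0 * v.1 1 < 0 ∧ (v.1 0)^2 ≤ (v.1 1)^2) := hv
      have h := pingXB (v.1 0) (v.1 1) (sanov_ne v) hvmem
      show 0 ≤ (sB • v).1 0 * (sB • v).1 1 ∧ ((sB • v).1 0)^2 < ((sB • v).1 1)^2
      rw [sB_smul]
      simpa using h
    · -- true : A
      show sA • v ∈ X true
      have hvmem : ¬(v.1 0 * v.1 1 < 0 ∧ (v.1 1)^2 < (v.1 0)^2) := hv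
      have h := pingXA (v.1 0) (v.1 1) hvmem
      show 0 ≤ (sA • v).1 0 * (sA • v).1 1 ∧ ((sA • v).1 1)^2 ≤ ((sA • v).1 0)^2
      rw [sA_smul]
      simpa using h
  · -- hY
    intro i z hz
    obtain ⟨v, hv, rfl⟩ := hz
    cases i
    · show sB⁻¹ • v ∈ Y false
      have hvmem : ¬(0 ≤ v.1 0 * v.1 1 ∧ (v.1 0)^2 < (v.1 1)^2) := hv
      have h := pingYB (v.1 0) (v.1 1) (sanov_ne v) hvmem
      show (sB⁻¹ • v).1 0 * (sB⁻¹ • v).1 1 < 0 ∧ ((sB⁻¹ • v).1 0)^2 ≤ ((sB⁻¹ • v).1 1)^2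
      rw [sBi_smul]
      simpa using h
    · show sA⁻¹ • v ∈ Y true
      have hvmem : ¬(0 ≤ v.1 0 * v.1 1 ∧ (v.1 1)^2 ≤ (v.1 0)^2) := hv
      have h := pingYA (v.1 0) (v.1 1) hvmem
      show (sA⁻¹ • v).1 0 * (sA⁻¹ • v).1 1 < 0 ∧ ((sA⁻¹ • v).1 1)^2 < ((sA⁻¹ • v).1 0)^2
      rw [sAi_smul]
      simpa using h
end

section
/- Let X be a proper (i.e., locally compact and complete) metric space. Then on the group Isom(X) of bijective isometries of X, the compact-open topology coincides with the topology of pointwise convergence, and with this topology Isom(X) is a topological group acting continuously on X. -/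
/-- The compact-open topology on the isometry group `Isom(X) = X ≃ᵢ X`. -/
noncomputable def isomCompactOpen (X : Type*) [MetricSpace X] :
    TopologicalSpace (X ≃ᵢ X) :=
  TopologicalSpace.induced
    (fun f : X ≃ᵢ X => (⟨f, f.continuous⟩ : C(X, X))) ContinuousMap.compactOpen

/-- The topology of pointwise convergence on the isometry group `Isom(X)`. -/
def isomPointwise (X : Type*) [MetricSpace X] :
    TopologicalSpace (X ≃ᵢ X) :=
  TopologicalSpace.induced (fun f : X ≃ᵢ X => (f : X → X)) Pi.topologicalSpace

/-- The tautological action of `Isom(X)` on `X`. -/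
instance isomSMul (X : Type*) [MetricSpace X] : SMul (X ≃ᵢ X) X :=
  ⟨fun f x => f x⟩

open Filter Topology Set

lemma isom_equicontinuous (X : Type*) [MetricSpace X] :
    Equicontinuous (fun f : X ≃ᵢ X => (f : X → X)) :=
  Metric.equicontinuous_of_continuity_modulus id tendsto_id _
    (fun x y f => by rw [f.isometry.dist_eq]; exact le_of_eq rfl)

lemma isom_co_eq_pw (X : Type*) [MetricSpace X] :
    isomCompactOpen X = isomPointwise X := by
  letI : TopologicalSpace (X ≃ᵢ X) := isomPointwise X
  set 𝔖 : Set (Set X) := {K : Set X | IsCompact K} with h𝔖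
  have covers : ⋃₀ 𝔖 = univ := by
    apply eq_univ_of_forall
    intro x
    exact ⟨{x}, isCompact_singleton, rfl⟩
  have hF : IsInducing (fun f : X ≃ᵢ X => (f : X → X)) := ⟨rfl⟩
  have h2 : IsInducing
      (UniformOnFun.ofFun 𝔖 ∘ fun f : X ≃ᵢ X => (f : X → X)) :=
    (EquicontinuousOn.isInducing_uniformOnFun_iff_pi covers (fun K hK => hK)
      (fun K _ => (isom_equicontinuous X).equicontinuousOn K)).mpr hF
  have h3 : IsInducing
      (ContinuousMap.toUniformOnFunIsCompact ∘
        fun f : X ≃ᵢ X => (⟨f, f.continuous⟩ : C(X, X))) := by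
    letI : TopologicalSpace (X ≃ᵢ X) := isomPointwise X
    exact h2
  have h4 : isomCompactOpen X =
      TopologicalSpace.induced
        (ContinuousMap.toUniformOnFunIsCompact ∘
          fun f : X ≃ᵢ X => (⟨f, f.continuous⟩ : C(X, X))) inferInstance := by
    rw [isomCompactOpen, ← induced_compose]
    congr 1
    exact ContinuousMap.isUniformEmbedding_toUniformOnFunIsCompact.isUniformInducing
      |>.isInducing.eq_induced
  exact h4.trans h3.eq_induced.symm

/-- For a proper metric space `X`, the compact-open topology on `Isom(X)` coincides
with the topology of pointwise convergence, and with this topology `Isom(X)` is a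
topological group acting continuously on `X`. -/
theorem isom_compactOpen_eq_pointwise (X : Type*) [MetricSpace X] [ProperSpace X] :
    isomCompactOpen X = isomPointwise X ∧
      @IsTopologicalGroup (X ≃ᵢ X) (isomCompactOpen X) _ ∧
      @ContinuousSMul (X ≃ᵢ X) X _ (isomCompactOpen X) _ := by
  have heq := isom_co_eq_pw X
  refine ⟨heq, ?_, ?_⟩
  · letI : TopologicalSpace (X ≃ᵢ X) := isomCompactOpen X
    have hι : IsInducing (fun f : X ≃ᵢ X => (⟨f, f.continuous⟩ : C(X, X))) := ⟨rfl⟩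
    refine { toContinuousMul := ⟨?_⟩, toContinuousInv := ⟨?_⟩ }
    · -- continuous multiplication, via composition in `C(X, X)`
      rw [hι.continuous_iff]
      have h1 : Continuous fun p : (X ≃ᵢ X) × (X ≃ᵢ X) =>
          ((⟨p.2, p.2.continuous⟩ : C(X, X)), (⟨p.1, p.1.continuous⟩ : C(X, X))) :=
        (hι.continuous.comp continuous_snd).prodMk (hι.continuous.comp continuous_fst)
      exact ContinuousMap.continuous_comp'.comp h1
    · -- continuous inversion, via the pointwise topology
      rw [heq]
      letI : TopologicalSpace (X ≃ᵢ X) := isomPointwise X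
      have hF : IsInducing (fun f : X ≃ᵢ X => (f : X → X)) := ⟨rfl⟩
      have heval : ∀ y : X, Continuous (fun f : X ≃ᵢ X => f y) :=
        fun y => (continuous_apply y).comp hF.continuous
      rw [hF.continuous_iff]
      rw [continuous_pi_iff]
      intro x
      rw [continuous_iff_continuousAt]
      intro f₀
      have key : ∀ f : X ≃ᵢ X, dist (f⁻¹ x) (f₀⁻¹ x) = dist x (f (f₀⁻¹ x)) := by
        intro f
        conv_lhs => rw [← f.isometry.dist_eq (f⁻¹ x) (f₀⁻¹ x)]
        simp [IsometryEquiv.apply_inv_self]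
      have hc : Continuous (fun f : X ≃ᵢ X => dist x (f (f₀⁻¹ x))) :=
        continuous_const.dist (heval (f₀⁻¹ x))
      have ht : Tendsto (fun f : X ≃ᵢ X => dist x (f (f₀⁻¹ x))) (𝓝 f₀) (𝓝 0) := by
        simpa using hc.tendsto f₀
      have goal : Tendsto (fun f : X ≃ᵢ X => f⁻¹ x) (𝓝 f₀) (𝓝 (f₀⁻¹ x)) := by
        refine tendsto_iff_dist_tendsto_zero.mpr ?_
        simpa only [key] using ht
      exact goal
  · letI : TopologicalSpace (X ≃ᵢ X) := isomCompactOpen X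
    have hι : IsInducing (fun f : X ≃ᵢ X => (⟨f, f.continuous⟩ : C(X, X))) := ⟨rfl⟩
    constructor
    have h1 : Continuous (fun p : (X ≃ᵢ X) × X => ((⟨p.1, p.1.continuous⟩ : C(X, X)), p.2)) :=
      (hι.continuous.comp continuous_fst).prodMk continuous_snd
    have hev : Continuous fun q : C(X, X) × X => q.1 q.2 := ContinuousEval.continuous_eval
    exact hev.comp h1
end
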